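/- Let F be a homeomorphism of the closed annulus Ā = (ℝ/ℤ) × [0,1] isotopic to the identity with the intersection property, let f be a lift of F to ℝ × [0,1], and let z be a positively recurrent point of F. Then the set E(z) is a nonempty bounded subset of ℝ; in particular ρ⁻(f; z) and ρ⁺(f; z) are real numbers. -/

import Mathlib

open Set Filter Topology MeasureTheory Function

noncomputable section

/-- The (generalized) annulus over a subset `J ⊆ ℝ`: for `J = Ioo 0 1` this is the
open annulus `(ℝ/ℤ) × (0,1)`, and for `J = Icc 0 1` the closed annulus `(ℝ/ℤ) × [0,1]`. -/
abbrev Ann (J : Set ℝ) : Type := AddCircle (1 : ℝ) × J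

/-- The universal cover `ℝ × J` of the annulus `Ann J`. -/
abbrev AnnCov (J : Set ℝ) : Type := ℝ × J

/-- The covering projection `π : ℝ × J → (ℝ/ℤ) × J`, `(x, y) ↦ (x + ℤ, y)`. -/
def covProj {J : Set ℝ} (p : AnnCov J) : Ann J := ((p.1 : AddCircle (1 : ℝ)), p.2)

/-- The deck transformation `T^k : (x, y) ↦ (x + k, y)`. -/
def deckT {J : Set ℝ} (k : ℤ) (p : AnnCov J) : AnnCov J := (p.1 + k, p.2)

/-- `f` is a lift of `F` to the universal cover: `π ∘ f = F ∘ π`. -/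
def IsLift {J : Set ℝ} (F : Ann J → Ann J) (f : AnnCov J → AnnCov J) : Prop :=
  ∀ p, covProj (f p) = F (covProj p)

/-- A homeomorphism `F` is isotopic to the identity: there is a continuous family
`(F_t)_{t ∈ [0,1]}` of homeomorphisms with `F_0 = id` and `F_1 = F`. -/
def IsotopicToId {X : Type*} [TopologicalSpace X] (F : X ≃ₜ X) : Prop :=
  ∃ H : C(unitInterval × X, X),
    (∀ z, H (0, z) = z) ∧ (∀ z, H (1, z) = F z) ∧
      ∀ t, ∃ G : X ≃ₜ X, ∀ z, H (t, z) = G z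

/-- A measure has total support if every nonempty open set has positive measure. -/
def TotalSupport {X : Type*} [TopologicalSpace X] [MeasurableSpace X]
    (μ : Measure X) : Prop :=
  ∀ U : Set X, IsOpen U → U.Nonempty → 0 < μ U

/-- `z` is a positively recurrent point of `F`: some subsequence of the forward
orbit of `z` converges to `z`. -/
def PosRec {X : Type*} [TopologicalSpace X] (F : X → X) (z : X) : Prop :=
  ∃ n : ℕ → ℕ, StrictMono n ∧ Tendsto (fun k => F^[n k] z) atTop (𝓝 z)

/-- `ρ` is the rotation number of `z` for the lift `f` of `F`: for every lift `z̃` of `z`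
and every subsequence of the forward orbit of `z` converging to `z`, the average
displacement of the first coordinate converges to `ρ`. -/
def HasRotNum {J : Set ℝ} (F : Ann J → Ann J) (f : AnnCov J → AnnCov J)
    (z : Ann J) (ρ : ℝ) : Prop :=
  ∀ zt : AnnCov J, covProj zt = z → ∀ n : ℕ → ℕ, StrictMono n →
    Tendsto (fun k => F^[n k] z) atTop (𝓝 z) →
    Tendsto (fun k => ((f^[n k] zt).1 - zt.1) / (n k : ℝ)) atTop (𝓝 ρ)

/-- The set of rotation numbers of positively recurrent points of `F`. -/
def RotSet {J : Set ℝ} (F : Ann J → Ann J) (f : AnnCov J → AnnCov J) : Set ℝ :=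
  {ρ | ∃ z, PosRec F z ∧ HasRotNum F f z ρ}

/-- The set `E(z) ⊆ ℝ ∪ {±∞}` of limits of average displacements along subsequences
of the forward orbit of `z` converging to `z`. -/
def Eset {J : Set ℝ} (F : Ann J → Ann J) (f : AnnCov J → AnnCov J)
    (z : Ann J) (zt : AnnCov J) : Set EReal :=
  {ρ | ∃ n : ℕ → ℕ, StrictMono n ∧
    Tendsto (fun k => F^[n k] z) atTop (𝓝 z) ∧
    Tendsto (fun k => ((((f^[n k] zt).1 - zt.1) / (n k : ℝ) : ℝ) : EReal)) atTop (𝓝 ρ)}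

/-- `ρ⁻(f; z) = inf E(z)`. -/
def rhoMinus {J : Set ℝ} (F : Ann J → Ann J) (f : AnnCov J → AnnCov J)
    (z : Ann J) (zt : AnnCov J) : EReal := sInf (Eset F f z zt)

/-- `ρ⁺(f; z) = sup E(z)`. -/
def rhoPlus {J : Set ℝ} (F : Ann J → Ann J) (f : AnnCov J → AnnCov J)
    (z : Ann J) (zt : AnnCov J) : EReal := sSup (Eset F f z zt)

/-- `z` is a `k`-prime-periodic point of `F`: `F^k z = z` and `F^l z ≠ z` for `1 ≤ l < k`. -/
def PerPrime {X : Type*} (F : X → X) (k : ℕ) (z : X) : Prop :=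
  F^[k] z = z ∧ ∀ l, 0 < l → l < k → F^[l] z ≠ z

/-- `C` is an essential circle in the annulus: the image of an injective continuous map
from the circle which is not null-homotopic. -/
def IsEssentialCircle {J : Set ℝ} (C : Set (Ann J)) : Prop :=
  ∃ γ : C(AddCircle (1 : ℝ), Ann J), Function.Injective γ ∧ Set.range γ = C ∧
    ∀ c : Ann J, ¬ γ.Homotopic (ContinuousMap.const _ c)

/-- `F` has the intersection property: every essential circle meets its image. -/
def IntersectionProp {J : Set ℝ} (F : Ann J → Ann J) : Prop :=
  ∀ C : Set (Ann J), IsEssentialCircle C → (C ∩ F '' C).Nonempty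


namespace EsetAux

open Set Filter Topology Function

/-! ### Deck transformation arithmetic -/

lemma deckT_fst {J : Set ℝ} (a : ℤ) (p : AnnCov J) : (deckT a p).1 = p.1 + a := rfl
lemma deckT_snd {J : Set ℝ} (a : ℤ) (p : AnnCov J) : (deckT a p).2 = p.2 := rfl

lemma deckT_deckT {J : Set ℝ} (a b : ℤ) (p : AnnCov J) :
    deckT a (deckT b p) = deckT (b + a) p := by
  unfold deckT
  refine Prod.ext ?_ rfl
  push_cast
  simp [add_assoc]

lemma deckT_congr {J : Set ℝ} {a b : ℤ} (h : a = b) (p : AnnCov J) :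
    deckT a p = deckT b p := by rw [h]

lemma deckT_zero {J : Set ℝ} (p : AnnCov J) : deckT 0 p = p := by
  unfold deckT
  refine Prod.ext ?_ rfl
  simp

lemma covProj_deckT {J : Set ℝ} (m : ℤ) (p : AnnCov J) :
    covProj (deckT m p) = covProj p := by
  unfold covProj deckT
  refine Prod.ext ?_ rfl
  show ((p.1 + (m:ℝ) : ℝ) : AddCircle (1:ℝ)) = ((p.1 : ℝ) : AddCircle (1:ℝ))
  rw [AddCircle.coe_add]
  simp

lemma covProj_eq {J : Set ℝ} {a b : AnnCov J} (h : covProj a = covProj b) :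
    a.2 = b.2 ∧ ∃ m : ℤ, b.1 = a.1 + m := by
  unfold covProj at h
  rw [Prod.mk.injEq] at h
  obtain ⟨h1, h2⟩ := h
  refine ⟨h2, ?_⟩
  rw [QuotientAddGroup.eq, AddSubgroup.mem_zmultiples_iff] at h1
  obtain ⟨k, hk⟩ := h1
  rw [zsmul_eq_mul, mul_one] at hk
  exact ⟨k, by linarith⟩

/-! ### Integer-valued continuous functions are constant -/

lemma int_valued_const {X : Type*} [TopologicalSpace X] [PreconnectedSpace X]
    {φ : X → ℝ} (hc : Continuous φ) (hi : ∀ x, ∃ m : ℤ, φ x = m) (p q : X) :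
    φ p = φ q := by
  by_contra hne
  obtain ⟨mp, hp⟩ := hi p
  obtain ⟨mq, hq⟩ := hi q
  have hmm : mp ≠ mq := by rintro rfl; exact hne (hp.trans hq.symm)
  have key : ∀ (u v : X) (mu mv : ℤ), φ u = mu → φ v = mv → mu < mv → False := by
    intro u v mu mv hu hv hlt
    have hmem : ((mu : ℝ) + 1/2) ∈ Icc (φ u) (φ v) := by
      constructor
      · rw [hu]; linarith
      · rw [hv]
        have : (mu : ℝ) + 1 ≤ mv := by exact_mod_cast hlt
        linarith
    obtain ⟨r, hr⟩ := intermediate_value_univ u v hc hmem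
    obtain ⟨m, hm⟩ := hi r
    rw [hm] at hr
    have h1 : ((m - mu : ℤ) : ℝ) = 1/2 := by push_cast; linarith
    have h2 : (0 : ℤ) < m - mu := by
      have : (0:ℝ) < ((m - mu : ℤ) : ℝ) := by rw [h1]; norm_num
      exact_mod_cast this
    have h3 : m - mu < 1 := by
      have : ((m - mu : ℤ) : ℝ) < 1 := by rw [h1]; norm_num
      exact_mod_cast this
    omega
  rcases lt_or_gt_of_ne hmm with h | h
  · exact key p q mp mq hp hq h
  · exact key q p mq mp hq hp h

/-! ### The annulus over `Icc 0 1` -/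

local notation "J1" => Set.Icc (0:ℝ) 1

instance : PreconnectedSpace (Set.Icc (0:ℝ) 1) :=
  Subtype.preconnectedSpace isPreconnected_Icc

lemma continuous_deckT (m : ℤ) : Continuous (deckT m : AnnCov J1 → AnnCov J1) :=
  (continuous_fst.add continuous_const).prodMk continuous_snd

/-- A homeomorphism of the cover that descends to the annulus commutes with the
deck transformation up to a fixed integer. -/
lemma exists_deck_const (g : AnnCov J1 ≃ₜ AnnCov J1)
    (hg : ∀ p, covProj (g (deckT 1 p)) = covProj (g p)) :
    ∃ k : ℤ, ∀ p, g (deckT 1 p) = deckT k (g p) := by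
  have hdat : ∀ p : AnnCov J1, (g (deckT 1 p)).2 = (g p).2 ∧
      ∃ m : ℤ, (g (deckT 1 p)).1 = (g p).1 + m := by
    intro p
    have := covProj_eq (hg p).symm
    exact ⟨this.1.symm, this.2⟩
  set φ : AnnCov J1 → ℝ := fun p => (g (deckT 1 p)).1 - (g p).1 with hφ
  have hcont : Continuous φ := by
    apply Continuous.sub
    · exact continuous_fst.comp (g.continuous.comp (continuous_deckT 1))
    · exact continuous_fst.comp g.continuous
  have hint : ∀ p, ∃ m : ℤ, φ p = m := by
    intro p
    obtain ⟨-, m, hm⟩ := hdat p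
    exact ⟨m, by simp [hφ, hm]⟩
  have hne : Nonempty (AnnCov J1) := ⟨(0, ⟨0, by norm_num⟩)⟩
  obtain ⟨p₀⟩ := hne
  obtain ⟨k, hk⟩ := hint p₀
  refine ⟨k, fun p => ?_⟩
  have hval : φ p = k := (int_valued_const hcont hint p p₀).trans hk
  refine Prod.ext ?_ (hdat p).1
  rw [deckT_fst]
  have : (g (deckT 1 p)).1 - (g p).1 = k := hval
  linarith

/-- Extension to all integer powers of the deck transformation. -/
lemma deck_all (g : AnnCov J1 ≃ₜ AnnCov J1) (k : ℤ)
    (hk : ∀ p, g (deckT 1 p) = deckT k (g p)) :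
    ∀ (m : ℤ) (p : AnnCov J1), g (deckT m p) = deckT (m * k) (g p) := by
  have hneg : ∀ q : AnnCov J1, g (deckT (-1) q) = deckT (-k) (g q) := by
    intro q
    have h1 : g (deckT 1 (deckT (-1) q)) = deckT k (g (deckT (-1) q)) := hk _
    rw [deckT_deckT, neg_add_cancel, deckT_zero] at h1
    have h2 := congrArg (deckT (-k)) h1.symm
    rw [deckT_deckT, add_neg_cancel, deckT_zero] at h2
    exact h2
  intro m
  induction m using Int.induction_on with
  | zero => intro p; rw [deckT_zero, zero_mul, deckT_zero]
  | succ i ih =>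
      intro p
      have h1 : deckT ((i:ℤ) + 1) p = deckT 1 (deckT i p) := (deckT_deckT 1 i p).symm
      rw [h1, hk, ih, deckT_deckT]
      exact deckT_congr (by ring) _
  | pred i ih =>
      intro p
      have h1 : deckT (-(i:ℤ) - 1) p = deckT (-1) (deckT (-i) p) := by
        rw [deckT_deckT]; exact deckT_congr (by ring) _
      rw [h1, hneg, ih, deckT_deckT]
      exact deckT_congr (by ring) _

lemma deckT_injective {J : Set ℝ} (p : AnnCov J) {a b : ℤ}
    (h : deckT a p = deckT b p) : a = b := by
  have h1 : p.1 + (a:ℝ) = p.1 + (b:ℝ) := congrArg Prod.fst h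
  have : (a:ℝ) = b := by linarith
  exact_mod_cast this

end EsetAux

open EsetAux

/-- For a homeomorphism of the closed annulus isotopic to the identity with the
intersection property and a positively recurrent point `z`, the set `E(z)` is a nonempty
bounded subset of `ℝ`; in particular `ρ⁻(f; z)` and `ρ⁺(f; z)` are real numbers. -/

theorem Eset_nonempty_bounded_closed_annulus
    (F : Ann (Set.Icc (0 : ℝ) 1) ≃ₜ Ann (Set.Icc (0 : ℝ) 1)) (hFI : IsotopicToId F)
    (hint : IntersectionProp (⇑F))
    (f : AnnCov (Set.Icc (0 : ℝ) 1) ≃ₜ AnnCov (Set.Icc (0 : ℝ) 1)) (hf : IsLift (⇑F) (⇑f))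
    (z : Ann (Set.Icc (0 : ℝ) 1)) (hz : PosRec (⇑F) z)
    (zt : AnnCov (Set.Icc (0 : ℝ) 1)) (hzt : covProj zt = z) :
    (Eset (⇑F) (⇑f) z zt).Nonempty ∧
      (∃ C : ℝ, ∀ ρ ∈ Eset (⇑F) (⇑f) z zt, ∃ r : ℝ, ρ = (r : EReal) ∧ |r| ≤ C) ∧
      (∃ a : ℝ, rhoMinus (⇑F) (⇑f) z zt = (a : EReal)) ∧
      (∃ b : ℝ, rhoPlus (⇑F) (⇑f) z zt = (b : EReal)) := by
  classical
  -- Step 1: the deck constant of `f` and of its inverse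
  have hcomm : ∀ p, covProj (f (deckT 1 p)) = covProj (f p) := by
    intro p
    rw [hf, hf, covProj_deckT]
  have hcomm' : ∀ p, covProj (f.symm (deckT 1 p)) = covProj (f.symm p) := by
    have hfs : ∀ q, covProj (f.symm q) = F.symm (covProj q) := by
      intro q
      have := hf (f.symm q)
      rw [f.apply_symm_apply] at this
      have := congrArg F.symm this.symm
      rwa [F.symm_apply_apply] at this
    intro p
    rw [hfs, hfs, covProj_deckT]
  obtain ⟨k, hk⟩ := exists_deck_const f hcomm
  obtain ⟨k', hk'⟩ := exists_deck_const f.symm hcomm'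
  have hall := deck_all f k hk
  have hall' := deck_all f.symm k' hk'
  -- Step 2: k * k' = 1, hence k ^ 2 = 1
  have hkk : k * k' = 1 := by
    have h1 : f.symm (f (deckT 1 zt)) = deckT 1 zt := f.symm_apply_apply _
    rw [hk, hall' k (f zt), f.symm_apply_apply] at h1
    exact (deckT_injective zt h1)
  have hk2 : k * k = 1 := by
    rcases Int.isUnit_iff.mp (IsUnit.of_mul_eq_one _ hkk) with h | h <;> rw [h] <;> norm_num
  -- Step 3: f ∘ f commutes with all deck transformations
  have hg2 : ∀ (m : ℤ) (p), f (f (deckT m p)) = deckT m (f (f p)) := by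
    intro m p
    rw [hall m p, hall (m * k) (f p)]
    congr 1
    rw [mul_assoc, hk2, mul_one]
  -- Step 4: bound the displacement of f ∘ f
  have hKcpt : IsCompact ((Set.Icc (0:ℝ) 1) ×ˢ (Set.univ : Set (Set.Icc (0:ℝ) 1))) :=
    isCompact_Icc.prod isCompact_univ
  have hKne : ((Set.Icc (0:ℝ) 1) ×ˢ (Set.univ : Set (Set.Icc (0:ℝ) 1))).Nonempty :=
    ⟨(0, ⟨0, by norm_num⟩), by constructor <;> simp⟩
  have hgc : Continuous (fun p : AnnCov (Set.Icc (0:ℝ) 1) => |(f (f p)).1 - p.1|) :=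
    ((continuous_fst.comp (f.continuous.comp f.continuous)).sub continuous_fst).abs
  obtain ⟨x₀, -, hx₀⟩ := hKcpt.exists_isMaxOn hKne hgc.continuousOn
  set M : ℝ := |(f (f x₀)).1 - x₀.1| with hM
  have hM0 : 0 ≤ M := abs_nonneg _
  have hMb : ∀ p : AnnCov (Set.Icc (0:ℝ) 1), |(f (f p)).1 - p.1| ≤ M := by
    intro p
    set q : AnnCov (Set.Icc (0:ℝ) 1) := deckT (-⌊p.1⌋) p with hq
    have hq1 : q.1 = Int.fract p.1 := by
      rw [hq, deckT_fst, Int.fract]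
      push_cast
      ring
    have hqK : q ∈ (Set.Icc (0:ℝ) 1) ×ˢ (Set.univ : Set (Set.Icc (0:ℝ) 1)) := by
      constructor
      · rw [hq1]
        exact ⟨Int.fract_nonneg _, (Int.fract_lt_one _).le⟩
      · trivial
    have hpq : p = deckT ⌊p.1⌋ q := by
      rw [hq, deckT_deckT, neg_add_cancel, deckT_zero]
    have heq : (f (f p)).1 - p.1 = (f (f q)).1 - q.1 := by
      rw [hpq, hg2, deckT_fst, deckT_fst]
      ring
    rw [heq]
    exact hx₀ hqK
  -- Step 6: linear bound on orbit displacement of zt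
  set C : ℝ := max M |(f zt).1 - zt.1| with hC
  have hC0 : 0 ≤ C := le_trans hM0 (le_max_left _ _)
  have hlin : ∀ n : ℕ, |((⇑f)^[n] zt).1 - zt.1| ≤ (n + 1) * C := by
    intro n
    induction n using Nat.strong_induction_on with
    | _ n ih =>
      match n with
      | 0 => simpa using hC0
      | 1 =>
          have h1 : |((⇑f)^[1] zt).1 - zt.1| ≤ C := by
            rw [Function.iterate_one, hC]
            exact le_max_right _ _
          calc |((⇑f)^[1] zt).1 - zt.1| ≤ C := h1
            _ ≤ ((1:ℕ) + 1) * C := by push_cast; linarith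
      | (m + 2) =>
          have hstep : ((⇑f)^[m + 2] zt) = f (f ((⇑f)^[m] zt)) := by
            have h1 : m + 2 = 2 + m := by ring
            rw [h1, Function.iterate_add_apply]
            rfl
          have hm := ih m (by omega)
          set r := (⇑f)^[m] zt
          rw [hstep]
          calc |(f (f r)).1 - zt.1| ≤ |(f (f r)).1 - r.1| + |r.1 - zt.1| := by
                have : (f (f r)).1 - zt.1 = ((f (f r)).1 - r.1) + (r.1 - zt.1) := by ring
                rw [this]; exact abs_add_le _ _
            _ ≤ M + (m + 1) * C := add_le_add (hMb r) hm
            _ ≤ C + (m + 1) * C := by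
                have hMC : M ≤ C := by rw [hC]; exact le_max_left _ _
                linarith
            _ ≤ ((m + 2 : ℕ) + 1) * C := by push_cast; nlinarith
  -- Step 7: bound on the averaged displacement
  have hquot : ∀ n : ℕ, |(((⇑f)^[n] zt).1 - zt.1) / (n : ℝ)| ≤ 2 * C := by
    intro n
    match n with
    | 0 =>
        simp only [Function.iterate_zero, id_eq, sub_self, zero_div, abs_zero]
        positivity
    | (m + 1) =>
        rw [abs_div]
        have hn0 : (0:ℝ) < ((m + 1 : ℕ) : ℝ) := by positivity
        rw [abs_of_pos hn0, div_le_iff₀ hn0]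
        calc |((⇑f)^[m+1] zt).1 - zt.1| ≤ ((m+1 : ℕ) + 1) * C := hlin (m+1)
          _ ≤ 2 * C * ((m+1 : ℕ) : ℝ) := by push_cast; nlinarith
  -- Step 8: nonemptiness via Bolzano–Weierstrass
  obtain ⟨n, hmono, hconv⟩ := hz
  set a : ℕ → ℝ := fun s => (((⇑f)^[n s] zt).1 - zt.1) / ((n s : ℕ) : ℝ) with ha
  have hamem : ∀ s, a s ∈ Set.Icc (-(2*C)) (2*C) := fun s => abs_le.mp (hquot (n s))
  obtain ⟨r₀, hr₀mem, φ, hφ, hlim⟩ := isCompact_Icc.tendsto_subseq hamem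
  have hEmem : ((r₀ : ℝ) : EReal) ∈ Eset (⇑F) (⇑f) z zt := by
    refine ⟨n ∘ φ, hmono.comp hφ, ?_, ?_⟩
    · exact hconv.comp hφ.tendsto_atTop
    · exact EReal.tendsto_coe.mpr hlim
  -- Step 9: every element of Eset is a real number of absolute value ≤ 2C
  have hbdd : ∀ ρ ∈ Eset (⇑F) (⇑f) z zt, ∃ r : ℝ, ρ = (r : EReal) ∧ |r| ≤ 2 * C := by
    intro ρ hρ
    obtain ⟨m, hmmono, hmconv, hmlim⟩ := hρ
    have hS : IsClosed ((fun r : ℝ => (r : EReal)) '' Set.Icc (-(2*C)) (2*C)) :=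
      (isCompact_Icc.image continuous_coe_real_ereal).isClosed
    have hρS : ρ ∈ (fun r : ℝ => (r : EReal)) '' Set.Icc (-(2*C)) (2*C) := by
      refine hS.mem_of_tendsto hmlim (Filter.Eventually.of_forall fun s => ?_)
      exact Set.mem_image_of_mem _ (abs_le.mp (hquot (m s)))
    obtain ⟨r, hr, hco⟩ := hρS
    exact ⟨r, hco.symm, abs_le.mpr hr⟩
  refine ⟨⟨_, hEmem⟩, ⟨2 * C, hbdd⟩, ?_, ?_⟩
  · -- rhoMinus is real
    have h1 : ((-(2*C) : ℝ) : EReal) ≤ rhoMinus (⇑F) (⇑f) z zt := by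
      apply le_sInf
      intro ρ hρ
      obtain ⟨r, rfl, hr⟩ := hbdd ρ hρ
      exact EReal.coe_le_coe_iff.mpr (abs_le.mp hr).1
    have h2 : rhoMinus (⇑F) (⇑f) z zt ≤ ((r₀ : ℝ) : EReal) := sInf_le hEmem
    have hB : rhoMinus (⇑F) (⇑f) z zt ≠ ⊥ :=
      ne_of_gt (lt_of_lt_of_le (EReal.bot_lt_coe _) h1)
    have hT : rhoMinus (⇑F) (⇑f) z zt ≠ ⊤ :=
      ne_of_lt (lt_of_le_of_lt h2 (EReal.coe_lt_top _))
    exact ⟨(rhoMinus (⇑F) (⇑f) z zt).toReal, (EReal.coe_toReal hT hB).symm⟩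
  · -- rhoPlus is real
    have h1 : rhoPlus (⇑F) (⇑f) z zt ≤ ((2*C : ℝ) : EReal) := by
      apply sSup_le
      intro ρ hρ
      obtain ⟨r, rfl, hr⟩ := hbdd ρ hρ
      exact EReal.coe_le_coe_iff.mpr (abs_le.mp hr).2
    have h2 : ((r₀ : ℝ) : EReal) ≤ rhoPlus (⇑F) (⇑f) z zt := le_sSup hEmem
    have hB : rhoPlus (⇑F) (⇑f) z zt ≠ ⊥ :=
      ne_of_gt (lt_of_lt_of_le (EReal.bot_lt_coe _) h2)
    have hT : rhoPlus (⇑F) (⇑f) z zt ≠ ⊤ := ne_of_lt (lt_of_le_of_lt h1 (EReal.coe_lt_top _))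
    exact ⟨(rhoPlus (⇑F) (⇑f) z zt).toReal, (EReal.coe_toReal hT hB).symm⟩
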